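/- Let K be a field, let d ≥ 2 with (d : K) ≠ 0, and let f ∈ K[x] be a squarefree polynomial of degree d with leading coefficient a_d. Set g(x) = d·f(x) − x·f′(x) (the dehomogenization of F_Y, of degree at most d − 1), and assume deg g = d − 1 and deg f′ = d − 1. Then a_d · Res(g, −f′) = d^{d−2} · Res(f, f′), where Res(g, −f′) is the resultant in degrees (d−1, d−1) and Res(f, f′) the resultant in degrees (d, d−1). Equivalently, writing Disc(F) for the discriminant of F (so that a_d·Disc(F) = (−1)^{d(d−1)/2}·Res(f, f′)), the resultant of the pair of coordinate polynomials of φ_F satisfies Res(φ_F) = (−1)^{d(d−1)/2}·d^{d−2}·Disc(F). -/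

import Mathlib

open Polynomial

/-- The Sylvester matrix of `P` (formal degree `m`) and `Q` (formal degree `n`):
an `(m + n) × (m + n)` matrix whose first `n` rows are the shifts
`(coeff P m, …, coeff P 0)` of the coefficients of `P` and whose last `m` rows are the
shifts `(coeff Q n, …, coeff Q 0)` of the coefficients of `Q`. -/
noncomputable def sylvesterMatrix {K : Type*} [Field K] (m n : ℕ) (P Q : Polynomial K) :
    Matrix (Fin (m + n)) (Fin (m + n)) K :=
  Matrix.of fun i j =>
    if (i : ℕ) < n then
      (if (i : ℕ) ≤ (j : ℕ) ∧ (j : ℕ) ≤ (i : ℕ) + m then P.coeff (m + i - j) else 0)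
    else
      (if (i : ℕ) - n ≤ (j : ℕ) ∧ (j : ℕ) ≤ ((i : ℕ) - n) + n then
        Q.coeff (n + ((i : ℕ) - n) - j) else 0)

/-- The resultant `Res_{m,n}(P, Q)` of `P` and `Q` in formal degrees `(m, n)`,
as the determinant of the Sylvester matrix. -/
noncomputable def resultant {K : Type*} [Field K] (m n : ℕ) (P Q : Polynomial K) : K :=
  (sylvesterMatrix m n P Q).det

/-- **Resultant of `φ_F` versus discriminant of `F`.**
Let `f` be squarefree of degree `d ≥ 2` with `(d : K) ≠ 0`, leading coefficient `a_d`, and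
`g = d·f − x·f'` (the dehomogenization of `F_Y`), with `deg g = d − 1` and `deg f' = d − 1`.
Then `a_d · Res_{d−1,d−1}(g, −f') = d^{d−2} · Res_{d,d−1}(f, f')`; equivalently, with
`a_d·Disc F = (−1)^{d(d−1)/2}·Res(f, f')`, the resultant of the pair of coordinate forms of
`φ_F` satisfies `Res(φ_F) = (−1)^{d(d−1)/2}·d^{d−2}·Disc F`. -/
theorem resultant_phiF_eq_discriminant
    {K : Type*} [Field K] (d : ℕ) (hd : 2 ≤ d) (hdK : (d : K) ≠ 0)
    (f : K[X]) (hsq : Squarefree f) (hdeg : f.natDegree = d)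
    (g : K[X]) (hg : g = C (d : K) * f - X * derivative f)
    (hgdeg : g.natDegree = d - 1) (hfpdeg : (derivative f).natDegree = d - 1) :
    f.leadingCoeff * resultant (d - 1) (d - 1) g (-derivative f)
      = (d : K) ^ (d - 2) * resultant d (d - 1) f (derivative f) := by
  obtain ⟨e, rfl⟩ : ∃ e, d = e + 2 := ⟨d - 2, by omega⟩
  classical
  set c : K := ((e + 2 : ℕ) : K) with hc
  set f' := derivative f with hf'
  set S := sylvesterMatrix (e+2) (e+1) f f' with hS
  set T : Matrix (Fin ((e+2)+(e+1))) (Fin ((e+2)+(e+1))) K :=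
    Matrix.of (fun i j => if j = i then (if (i:ℕ) < e+1 then c else 1)
      else if (i:ℕ) < e+1 ∧ (j:ℕ) = (i:ℕ) + e + 1 then -1 else 0) with hT
  set G : Matrix (Fin ((e+2)+(e+1))) (Fin ((e+2)+(e+1))) K :=
    Matrix.of (fun i j => if (i:ℕ) < e+1 then
      (if (i:ℕ) ≤ (j:ℕ) ∧ (j:ℕ) ≤ (i:ℕ) + (e+2) then g.coeff (e+2 + i - j) else 0)
      else S i j) with hG
  have hTdet : T.det = c ^ (e+1) := by
    rw [Matrix.det_of_upperTriangular]
    · have hdiag : ∀ i : Fin ((e+2)+(e+1)), T i i = if (i:ℕ) < e+1 then c else 1 := by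
        intro i; simp [hT]
      calc ∏ i, T i i = ∏ i : Fin ((e+2)+(e+1)), (if (i:ℕ) < e+1 then c else 1) :=
              Finset.prod_congr rfl fun i _ => hdiag i
        _ = ∏ i : Fin ((e+1)+(e+2)), (if (i:ℕ) < e+1 then c else 1) := by
              refine (Fintype.prod_equiv (finCongr (by omega)) _ _ fun i => ?_).symm
              simp
        _ = c ^ (e+1) * 1 ^ (e+2) := by rw [Fin.prod_univ_add]; simp [Fin.is_le, show ∀ x : ℕ, ¬ (e + 1 + x ≤ e) from fun x => by omega]
        _ = c ^ (e+1) := by ring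
    · intro i j hij
      have hij' : (j:ℕ) < (i:ℕ) := hij
      simp only [hT, Matrix.of_apply]
      rw [if_neg, if_neg]
      · rintro ⟨-, h⟩; omega
      · intro h; rw [h] at hij'; omega
  -- coefficient identities
  have hgc : ∀ k : ℕ, 1 ≤ k → g.coeff k = c * f.coeff k - f'.coeff (k - 1) := by
    intro k hk
    obtain ⟨k, rfl⟩ : ∃ k', k = k' + 1 := ⟨k - 1, by omega⟩
    rw [hg, coeff_sub, coeff_C_mul, coeff_X_mul]
    simp
  have hg0 : g.coeff 0 = c * f.coeff 0 := by
    have h0 : (X * f').coeff 0 = 0 := by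
      rw [mul_comm]; exact coeff_mul_X_zero _
    rw [hg, coeff_sub, coeff_C_mul, h0, sub_zero]
  have hgtop : g.coeff (e+2) = 0 :=
    coeff_eq_zero_of_natDegree_lt (by omega)
  -- T * S = G
  have hTS : T * S = G := by
    ext i j
    rw [Matrix.mul_apply]
    by_cases hi : (i:ℕ) < e+1
    · set σ : Fin ((e+2)+(e+1)) := ⟨(i:ℕ) + e + 1, by omega⟩ with hσ
      have hσv : (σ:ℕ) = (i:ℕ) + e + 1 := rfl
      have hTrow : ∀ k, T i k = (if k = i then c else 0) + (if k = σ then (-1:K) else 0) := by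
        intro k
        simp only [hT, Matrix.of_apply]
        rcases eq_or_ne k i with h1 | h1
        · subst h1
          rw [if_pos rfl, if_pos hi, if_pos rfl,
            if_neg (by rw [Fin.ext_iff, hσv]; omega), add_zero]
        · rw [if_neg h1]
          rcases eq_or_ne k σ with h2 | h2
          · subst h2
            rw [if_pos ⟨hi, hσv⟩, if_neg h1, if_pos rfl, zero_add]
          · rw [if_neg, if_neg h1, if_neg h2, add_zero]
            rintro ⟨-, hv⟩
            exact h2 (Fin.ext (by rw [hσv]; omega))
      have hsum : ∑ k, T i k * S k j = c * S i j - S σ j := by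
        calc ∑ k, T i k * S k j
            = ∑ k, ((if k = i then c * S k j else 0) + (if k = σ then -S k j else 0)) := by
              refine Finset.sum_congr rfl fun k _ => ?_
              rw [hTrow k, add_mul]; simp only [ite_mul, zero_mul, neg_one_mul]
          _ = c * S i j - S σ j := by
              rw [Finset.sum_add_distrib, Finset.sum_ite_eq', Finset.sum_ite_eq']
              simp [sub_eq_add_neg]
      rw [hsum]
      -- now compute entries
      have hσn : ¬ ((σ:ℕ) < e + 1) := by omega
      have hσr : (σ:ℕ) - (e+1) = (i:ℕ) := by omega
      simp only [hS, hG, sylvesterMatrix, Matrix.of_apply, if_pos hi, if_neg hσn, hσr]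
      by_cases hj1 : (i:ℕ) ≤ (j:ℕ) ∧ (j:ℕ) ≤ (i:ℕ) + (e+2)
      · rw [if_pos hj1]
        by_cases hj2 : (j:ℕ) = (i:ℕ) + (e+2)
        · rw [if_neg (by omega), sub_zero, show e+2+(i:ℕ)-(j:ℕ) = 0 by omega, hg0,
            if_pos hj1]
        · rw [if_pos ⟨hj1.1, by omega⟩, hgc (e+2+(i:ℕ)-(j:ℕ)) (by omega),
            show e+2+(i:ℕ)-(j:ℕ) - 1 = e+1+(i:ℕ)-(j:ℕ) by omega, if_pos hj1]
      · rw [if_neg hj1, if_neg (by omega), mul_zero, sub_zero, if_neg hj1]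
    · have hTrow : ∀ k, T i k = if k = i then (1:K) else 0 := by
        intro k
        simp only [hT, Matrix.of_apply]
        rcases eq_or_ne k i with h1 | h1
        · subst h1; rw [if_pos rfl, if_neg hi, if_pos rfl]
        · rw [if_neg h1, if_neg h1, if_neg (by rintro ⟨hcon, -⟩; exact hi hcon)]
      calc ∑ k, T i k * S k j = ∑ k, (if k = i then S k j else 0) := by
            refine Finset.sum_congr rfl fun k _ => ?_
            rw [hTrow k, ite_mul, zero_mul, one_mul]
        _ = S i j := by rw [Finset.sum_ite_eq']; simp
        _ = G i j := by simp only [hG, Matrix.of_apply, if_neg hi]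
  -- column expansion
  set i0 : Fin ((e+2)+(e+1)) := ⟨e+1, by omega⟩ with hi0
  have hcol0 : ∀ i j : Fin ((e+2)+(e+1)), i ≠ i0 → (j:ℕ) = 0 → G i j = 0 := by
    intro i j hi hj
    simp only [hG, hS, sylvesterMatrix, Matrix.of_apply, hj]
    by_cases hilt : (i:ℕ) < e+1
    · rw [if_pos hilt]
      by_cases hiz : (i:ℕ) = 0
      · rw [if_pos (by omega), show e+2+(i:ℕ)-0 = e+2 by omega, hgtop]
      · rw [if_neg (by omega)]
    · have hine : (i:ℕ) ≠ e+1 := fun h => hi (Fin.ext h)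
      have hcond : ¬((i:ℕ) - (e+1) ≤ 0 ∧ (0:ℕ) ≤ (i:ℕ) - (e+1) + (e+1)) := by omega
      rw [if_neg hilt, if_neg hcond, if_neg hilt]
  have hGi0 : ∀ i j : Fin ((e+2)+(e+1)), (i:ℕ) = e+1 → (j:ℕ) = 0 → G i j = f'.coeff (e+1) := by
    intro i j hiv hj
    simp only [hG, hS, sylvesterMatrix, Matrix.of_apply, hj, hiv]
    rw [if_neg (show ¬(e+1 < e+1) from by omega),
      if_pos (show e+1-(e+1) ≤ 0 ∧ 0 ≤ e+1-(e+1)+(e+1) from by omega)]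
    norm_num
  have hdetG : G.det = (-1 : K) ^ (e+1) * f'.coeff (e+1)
      * (G.submatrix i0.succAbove Fin.succ).det := by
    have hsum := Finset.sum_eq_single (s := (Finset.univ : Finset (Fin ((e+2)+(e+1)))))
      (f := fun i => (-1:K)^(i:ℕ) * G i ⟨0, by omega⟩ * (G.submatrix i.succAbove Fin.succ).det)
      i0
      (fun b _ hb => by simp only [hcol0 b (⟨0, by omega⟩ : Fin ((e+2)+(e+1))) hb rfl, mul_zero, zero_mul])
      (fun h => absurd (Finset.mem_univ i0) h)
    rw [Matrix.det_succ_column_zero]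
    refine Eq.trans hsum ?_
    have hval : (i0:ℕ) = e+1 := rfl
    simp only [hGi0 i0 (⟨0, by omega⟩ : Fin ((e+2)+(e+1))) rfl rfl, hval]
  -- identify the submatrix with the small Sylvester matrix
  have hi0v : (i0:ℕ) = e+1 := rfl
  set ψ : Fin ((e+1)+(e+1)) ≃ Fin ((e+2)+e) := finCongr (by omega) with hψ
  have hψv : ∀ x : Fin ((e+1)+(e+1)), ((ψ x : Fin ((e+2)+e)) : ℕ) = (x:ℕ) := by
    intro x; simp [hψ]
  have hsub : (G.submatrix i0.succAbove Fin.succ).submatrix ψ ψ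
      = sylvesterMatrix (e+1) (e+1) g f' := by
    ext a b
    have hbv : ((Fin.succ (ψ b)) : ℕ) = (b:ℕ)+1 := by
      rw [Fin.val_succ, hψv]
    simp only [Matrix.submatrix_apply, hG, hS, sylvesterMatrix, Matrix.of_apply, hbv]
    by_cases ha : (a:ℕ) < e+1
    · have hrow : ((i0.succAbove (ψ a)) : ℕ) = (a:ℕ) := by
        rw [Fin.succAbove_of_castSucc_lt _ _ (by rw [Fin.lt_def, Fin.coe_castSucc, hψv]; exact ha),
          Fin.coe_castSucc, hψv]
      simp only [hrow, if_pos ha]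
      by_cases h1 : (a:ℕ) ≤ (b:ℕ) ∧ (b:ℕ) ≤ (a:ℕ)+(e+1)
      · rw [if_pos (show (a:ℕ) ≤ (b:ℕ)+1 ∧ (b:ℕ)+1 ≤ (a:ℕ)+(e+2) from by omega), if_pos h1,
          show e+2+(a:ℕ)-((b:ℕ)+1) = e+1+(a:ℕ)-(b:ℕ) from by omega]
      · rw [if_neg h1]
        by_cases h2 : (a:ℕ) = (b:ℕ)+1
        · rw [if_pos (show (a:ℕ) ≤ (b:ℕ)+1 ∧ (b:ℕ)+1 ≤ (a:ℕ)+(e+2) from by omega),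
            show e+2+(a:ℕ)-((b:ℕ)+1) = e+2 from by omega, hgtop]
        · rw [if_neg (show ¬((a:ℕ) ≤ (b:ℕ)+1 ∧ (b:ℕ)+1 ≤ (a:ℕ)+(e+2)) from by omega)]
    · have hrow : ((i0.succAbove (ψ a)) : ℕ) = (a:ℕ)+1 := by
        rw [Fin.succAbove_of_le_castSucc _ _ (by rw [Fin.le_def, Fin.coe_castSucc, hψv, hi0v]; omega),
          Fin.val_succ, hψv]
      simp only [hrow, if_neg (show ¬((a:ℕ)+1 < e+1) from by omega), if_neg ha]
      by_cases h1 : (a:ℕ)-(e+1) ≤ (b:ℕ) ∧ (b:ℕ) ≤ (a:ℕ)-(e+1)+(e+1)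
      · rw [if_pos (show (a:ℕ)+1-(e+1) ≤ (b:ℕ)+1 ∧ (b:ℕ)+1 ≤ (a:ℕ)+1-(e+1)+(e+1) from by omega),
          if_pos h1,
          show e+1+((a:ℕ)+1-(e+1))-((b:ℕ)+1) = e+1+((a:ℕ)-(e+1))-(b:ℕ) from by omega]
      · rw [if_neg (show ¬((a:ℕ)+1-(e+1) ≤ (b:ℕ)+1 ∧ (b:ℕ)+1 ≤ (a:ℕ)+1-(e+1)+(e+1)) from by omega),
          if_neg h1]
  -- determinant relations and final algebra
  have hdetsub : (G.submatrix i0.succAbove Fin.succ).det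
      = (sylvesterMatrix (e+1) (e+1) g f').det := by
    have h := Matrix.det_submatrix_equiv_self ψ (G.submatrix i0.succAbove Fin.succ)
    rw [hsub] at h
    exact h.symm
  set A : K := (sylvesterMatrix (e+2) (e+1) f f').det with hA
  set B : K := (sylvesterMatrix (e+1) (e+1) g f').det with hB
  have hprod : ∀ x y : K,
      (∏ i : Fin ((e+1)+(e+1)), (if (i:ℕ) < e+1 then x else y)) = x^(e+1) * y^(e+1) := by
    intro x y; rw [Fin.prod_univ_add]; simp [Fin.is_le, show ∀ z : ℕ, ¬ (z + (e + 1) ≤ e) from fun z => by omega]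
  have hneg : (sylvesterMatrix (e+1) (e+1) g (-f')).det = (-1:K)^(e+1) * B := by
    have hD : sylvesterMatrix (e+1) (e+1) g (-f')
        = Matrix.diagonal (fun i : Fin ((e+1)+(e+1)) => if (i:ℕ) < e+1 then (1:K) else -1)
          * sylvesterMatrix (e+1) (e+1) g f' := by
      ext i j
      rw [Matrix.diagonal_mul]
      simp only [sylvesterMatrix, Matrix.of_apply]
      by_cases hi : (i:ℕ) < e+1
      · rw [if_pos hi, if_pos hi, if_pos hi, one_mul]
      · rw [if_neg hi, if_neg hi, if_neg hi]
        split
        · rw [coeff_neg]; ring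
        · ring
    rw [hD, Matrix.det_mul, Matrix.det_diagonal, hprod]
    rw [one_pow, one_mul]
  have hchain : c^(e+1) * A = (-1:K)^(e+1) * (c * f.leadingCoeff) * B := by
    have h1 : G.det = c^(e+1) * A := by
      rw [← hTS, Matrix.det_mul, hTdet, hA]
    have hlc : f'.coeff (e+1) = c * f.leadingCoeff := by
      rw [hf', coeff_derivative, Polynomial.leadingCoeff, hdeg, hc]
      push_cast
      ring
    rw [h1, hdetsub, hlc] at hdetG
    rw [hdetG]
  have hsq : ((-1:K)^(e+1)) * ((-1:K)^(e+1)) = 1 := by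
    rw [← pow_add, show (e+1)+(e+1) = 2*(e+1) from by ring, pow_mul]
    norm_num
  have h4 : (c * f.leadingCoeff) * B = (-1:K)^(e+1) * (c^(e+1) * A) := by
    calc (c * f.leadingCoeff) * B
        = ((-1:K)^(e+1) * (-1:K)^(e+1)) * ((c * f.leadingCoeff) * B) := by rw [hsq, one_mul]
      _ = (-1:K)^(e+1) * ((-1:K)^(e+1) * (c * f.leadingCoeff) * B) := by ring
      _ = (-1:K)^(e+1) * (c^(e+1) * A) := by rw [← hchain]
  have hcne : c ≠ 0 := hdK
  show f.leadingCoeff * resultant (e+1) (e+1) g (-f') = c^e * resultant (e+2) (e+1) f f'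
  have hres1 : resultant (e+1) (e+1) g (-f') = (-1:K)^(e+1) * B := hneg
  have hres2 : resultant (e+2) (e+1) f f' = A := rfl
  rw [hres1, hres2]
  apply mul_left_cancel₀ hcne
  calc c * (f.leadingCoeff * ((-1:K)^(e+1) * B))
      = (-1:K)^(e+1) * ((c * f.leadingCoeff) * B) := by ring
    _ = (-1:K)^(e+1) * ((-1:K)^(e+1) * (c^(e+1) * A)) := by rw [h4]
    _ = ((-1:K)^(e+1) * (-1:K)^(e+1)) * (c^(e+1) * A) := by ring
    _ = c^(e+1) * A := by rw [hsq, one_mul]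
    _ = c * (c^e * A) := by ring
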